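/- Let A be a unique factorization domain containing ℚ and let X be a nonzero locally nilpotent derivation of A. Then for every local slice s of X there exists a minimal local slice s₀ of X such that X(s₀) divides X(s) in A. -/

import Mathlib

/-- `s` is a local slice of the derivation `X`: `X s ≠ 0` and `X² s = 0`. -/
def IsLocalSlice {A : Type*} [CommRing A] (X : Derivation ℤ A A) (s : A) : Prop :=
  X s ≠ 0 ∧ X (X s) = 0

/-- A local slice `s` is minimal if every local slice `v` with `X v ∣ X s`
satisfies `X v = μ • X s` for a unit `μ`. -/
def IsMinimalLocalSlice {A : Type*} [CommRing A] (X : Derivation ℤ A A) (s : A) : Prop :=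
  IsLocalSlice X s ∧ ∀ v : A, IsLocalSlice X v → X v ∣ X s →
    ∃ μ : Aˣ, X v = (μ : A) * X s

/-- For a nonzero locally nilpotent derivation of a UFD containing `ℚ`, every local
slice `s` admits a minimal local slice `s₀` with `X s₀ ∣ X s`. -/
theorem minimal_local_slice_exists
    {A : Type*} [CommRing A] [IsDomain A] [UniqueFactorizationMonoid A] [Algebra ℚ A]
    (X : Derivation ℤ A A) (hX : X ≠ 0)
    (hln : ∀ a : A, ∃ n : ℕ, 0 < n ∧ (⇑X)^[n] a = 0)
    (s : A) (hs : IsLocalSlice X s) :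
    ∃ s₀ : A, IsMinimalLocalSlice X s₀ ∧ X s₀ ∣ X s := by
  classical
  have hwf : WellFounded (DvdNotUnit (α := A)) := wellFounded_dvdNotUnit
  set S : Set A := {a | (∃ v, IsLocalSlice X v ∧ X v = a) ∧ a ∣ X s} with hSdef
  have hSne : X s ∈ S := ⟨⟨s, hs, rfl⟩, dvd_rfl⟩
  obtain ⟨m, hmS, hmin⟩ := hwf.has_min S ⟨_, hSne⟩
  obtain ⟨⟨s₀, hs₀, hm⟩, hdvd⟩ := hmS
  refine ⟨s₀, ⟨hs₀, ?_⟩, hm ▸ hdvd⟩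
  intro v hv hvd
  have hvm : X v ∣ m := hm ▸ hvd
  have hvS : X v ∈ S := ⟨⟨v, hv, rfl⟩, dvd_trans hvm hdvd⟩
  have hnot := hmin _ hvS
  have hmv : m ∣ X v := by
    by_contra h
    exact hnot ((dvd_and_not_dvd_iff).mp ⟨hvm, h⟩)
  obtain ⟨u, hu⟩ := associated_of_dvd_dvd hvm hmv
  refine ⟨u⁻¹, ?_⟩
  rw [hm, ← hu]
  rw [mul_comm (X v), Units.inv_mul_cancel_left]
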